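/- Let xs < xt be integers, C ≥ 0 a real number, and f : ℤ → ℝ a function satisfying the Ameso(C) condition on [xs,xt]. Suppose there exist x' ∈ [xs,xt] and z ∈ [xs,xt] with xs ≤ z < x' such that f(z) − f(x') ≥ C. Then min over y ∈ [z, xt] of f(y) equals min over y ∈ [xs, xt] of f(y). -/
import Mathlib


/-- Ceiling of `(x+y)/2` as a rational. -/
def mceil (x y : ℤ) : ℤ := ⌈((x : ℚ) + (y : ℚ)) / 2⌉

/-- Floor of `(x+y)/2` as a rational. -/
def mfloor (x y : ℤ) : ℤ := ⌊((x : ℚ) + (y : ℚ)) / 2⌋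

lemma mceil_eq_of_even (a b k : ℤ) (h : a + b = 2 * k) : mceil a b = k := by
  unfold mceil
  have h2 : ((a : ℚ) + (b : ℚ)) / 2 = (k : ℚ) := by
    have : (a : ℚ) + (b : ℚ) = 2 * (k : ℚ) := by exact_mod_cast congrArg (Int.cast : ℤ → ℚ) h
    linarith
  rw [h2, Int.ceil_intCast]

lemma mfloor_eq_of_even (a b k : ℤ) (h : a + b = 2 * k) : mfloor a b = k := by
  unfold mfloor
  have h2 : ((a : ℚ) + (b : ℚ)) / 2 = (k : ℚ) := by
    have : (a : ℚ) + (b : ℚ) = 2 * (k : ℚ) := by exact_mod_cast congrArg (Int.cast : ℤ → ℚ) h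
    linarith
  rw [h2, Int.floor_intCast]

/-- Key lemma: if `f z - f r ≥ C` with `l < z < r` and `f` is Ameso(C) on `[l, r]`,
then `f l ≥ f z - C`. -/
lemma ameso_key (l r : ℤ) (C : ℝ) (hC : 0 ≤ C) (f : ℤ → ℝ)
    (hAmeso : ∀ x ∈ Finset.Icc l r, ∀ y ∈ Finset.Icc l r,
      f x + f y + C ≥ f (mceil x y) + f (mfloor x y))
    (z : ℤ) (hz1 : l < z) (hz2 : z < r) (hgap : f z - f r ≥ C) :
    f l ≥ f z - C := by
  set S : Finset ℤ := Finset.Icc (l + 1) (r - 1) with hS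
  have hzS : z ∈ S := by simp only [hS, Finset.mem_Icc]; omega
  have hSne : S.Nonempty := ⟨z, hzS⟩
  set A : ℝ := S.sup' hSne f with hA
  have hub : ∀ x ∈ S, f x ≤ A := fun x hx => Finset.le_sup' f hx
  have hAz : f z ≤ A := hub z hzS
  set T : Finset ℤ := S.filter (fun x => f x = A) with hT
  have hTne : T.Nonempty := by
    obtain ⟨a, haS, ha⟩ := Finset.exists_mem_eq_sup' hSne f
    exact ⟨a, by simp only [hT, Finset.mem_filter]; exact ⟨haS, ha.symm⟩⟩
  set z₀ : ℤ := T.min' hTne with hz₀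
  have hz₀T : z₀ ∈ T := Finset.min'_mem _ _
  have hz₀S : z₀ ∈ S := (Finset.mem_filter.1 hz₀T).1
  have hfz₀ : f z₀ = A := (Finset.mem_filter.1 hz₀T).2
  have hz₀b : l + 1 ≤ z₀ ∧ z₀ ≤ r - 1 := Finset.mem_Icc.1 hz₀S
  have hmin : ∀ x ∈ S, f x = A → z₀ ≤ x := fun x hx hfx =>
    Finset.min'_le _ _ (by simp only [hT, Finset.mem_filter]; exact ⟨hx, hfx⟩)
  have hlmem : l ∈ Finset.Icc l r := Finset.mem_Icc.2 ⟨le_refl _, by omega⟩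
  have hrmem : r ∈ Finset.Icc l r := Finset.mem_Icc.2 ⟨by omega, le_refl _⟩
  rcases lt_trichotomy (2 * z₀) (l + r) with hc | hc | hc
  · -- reflect l across z₀ : v = 2 z₀ - l lies strictly inside
    have hvS : (2 * z₀ - l) ∈ S := by simp only [hS, Finset.mem_Icc]; omega
    have hvmem : (2 * z₀ - l) ∈ Finset.Icc l r := by simp only [Finset.mem_Icc]; omega
    have key := hAmeso l hlmem (2 * z₀ - l) hvmem
    rw [mceil_eq_of_even l (2 * z₀ - l) z₀ (by ring), mfloor_eq_of_even l (2 * z₀ - l) z₀ (by ring)] at key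
    have hv := hub _ hvS
    linarith
  · -- midpoint of (l, r) is exactly z₀
    have key := hAmeso l hlmem r hrmem
    rw [mceil_eq_of_even l r z₀ (by omega), mfloor_eq_of_even l r z₀ (by omega)] at key
    linarith
  · -- reflect r across z₀ : w = 2 z₀ - r is an argmax smaller than z₀, contradiction
    exfalso
    have hwS : (2 * z₀ - r) ∈ S := by simp only [hS, Finset.mem_Icc]; omega
    have hwmem : (2 * z₀ - r) ∈ Finset.Icc l r := by simp only [Finset.mem_Icc]; omega
    have key := hAmeso (2 * z₀ - r) hwmem r hrmem
    rw [mceil_eq_of_even (2 * z₀ - r) r z₀ (by ring), mfloor_eq_of_even (2 * z₀ - r) r z₀ (by ring)] at key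
    have hw1 : f (2 * z₀ - r) ≤ A := hub _ hwS
    have hw2 : f (2 * z₀ - r) = A := le_antisymm hw1 (by linarith)
    have := hmin _ hwS hw2
    omega

/-- Corollary 3: if `z < x'` in `[xs, xt]` and `f(z) - f(x') ≥ C`, then the minimum of
`f` over `[z, xt]` equals the minimum over `[xs, xt]`. -/
theorem ameso_restrict_left
    (xs xt : ℤ) (hxst : xs < xt) (C : ℝ) (hC : 0 ≤ C) (f : ℤ → ℝ)
    (hAmeso : ∀ x ∈ Finset.Icc xs xt, ∀ y ∈ Finset.Icc xs xt,
      f x + f y + C ≥ f (mceil x y) + f (mfloor x y))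
    (x' z : ℤ) (hx'l : xs ≤ x') (hx'r : x' ≤ xt) (hzl : xs ≤ z) (hzx' : z < x')
    (hgap : f z - f x' ≥ C) :
    (Finset.Icc z xt).inf' (Finset.nonempty_Icc.2 (by omega)) f
      = (Finset.Icc xs xt).inf' (Finset.nonempty_Icc.2 (by omega)) f := by
  have hx'mem : x' ∈ Finset.Icc z xt := Finset.mem_Icc.2 ⟨le_of_lt hzx', hx'r⟩
  apply le_antisymm
  · apply Finset.le_inf'
    intro y hy
    have hy' := Finset.mem_Icc.1 hy
    rcases lt_or_ge y z with hyz | hzy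
    · -- y < z : apply the key lemma on [y, x']
      have hkey : f y ≥ f z - C := by
        apply ameso_key y x' C hC f _ z hyz hzx' hgap
        intro a ha b hb
        exact hAmeso a (Finset.Icc_subset_Icc hy'.1 hx'r ha) b (Finset.Icc_subset_Icc hy'.1 hx'r hb)
      have h1 : (Finset.Icc z xt).inf' (Finset.nonempty_Icc.2 (by omega)) f ≤ f x' :=
        Finset.inf'_le f hx'mem
      linarith
    · exact Finset.inf'_le f (Finset.mem_Icc.2 ⟨hzy, hy'.2⟩)
  · apply Finset.le_inf'
    intro y hy
    have hy' := Finset.mem_Icc.1 hy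
    exact Finset.inf'_le f (Finset.mem_Icc.2 ⟨by omega, hy'.2⟩)
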